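/- arXiv:alg-geom/9312010 — 2 statements merged into one kernel-verified Lean document; each statement's English description precedes it below -/
import Mathlib

section
/- Let h be a torsion-free FDH function of rank ρ with trivial WHN filtration, h(n) = ρ(n-ν)+β for n ≫ 0 with 0 ≤ β < ρ, and rank-one pieces h^i as above. Then for 1 ≤ i ≤ β the deficiency of h^i, namely Σ_{n ∈ ℤ} ((n - ν + 1)_+ - h^i(n)), is strictly positive. -/
open Finset

/-- First difference `r(n) = h(n) - h(n-1)`. -/
def dr (h : ℤ → ℤ) (n : ℤ) : ℤ := h n - h (n - 1)

/-- An FDH function: nonnegative, nondecreasing first differences nonnegative,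
vanishing for `n ≪ 0`, eventually linear `ρ n + σ` with `ρ ≥ 0`. -/
def IsFDH (h : ℤ → ℤ) : Prop :=
  (∀ n, 0 ≤ h n) ∧ (∀ n, 0 ≤ dr h n) ∧ (∃ N : ℤ, ∀ n ≤ N, h n = 0) ∧
  (∃ ρ σ : ℤ, 0 ≤ ρ ∧ ∃ N : ℤ, ∀ n ≥ N, h n = ρ * n + σ)

/-- Torsion-free: `r(m) ≥ 1` implies `r(n) ≥ 1` for all `n ≥ m`. -/
def TorsionFree (h : ℤ → ℤ) : Prop := ∀ m n : ℤ, m ≤ n → 1 ≤ dr h m → 1 ≤ dr h n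

/-- `ht` is the function `h̃(n) = max_{m ≥ n} (h(m) + (n-m) r(m))`. -/
def TildeSpec (h ht : ℤ → ℤ) : Prop :=
  ∀ n : ℤ, IsGreatest {v : ℤ | ∃ m : ℤ, n ≤ m ∧ v = h m + (n - m) * dr h m} (ht n)

/-- `t n` is the largest maximizer of `m ↦ h(m) + (n-m) r(m)` over `m ≥ n`,
equal to `⊤` when the set of maximizers is unbounded. -/
def TSpec (h ht : ℤ → ℤ) (t : ℤ → WithTop ℤ) : Prop :=
  ∀ n : ℤ,
    (∀ m : ℤ, n ≤ m → ht n = h m + (n - m) * dr h m → (m : WithTop ℤ) ≤ t n) ∧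
    (∀ τ : ℤ, t n = (τ : WithTop ℤ) → n ≤ τ ∧ ht n = h τ + (n - τ) * dr h τ) ∧
    (t n = ⊤ → ∀ M : ℤ, ∃ m : ℤ, M ≤ m ∧ n ≤ m ∧ ht n = h m + (n - m) * dr h m)

/-- The function gamma^i of the canonical rank-one decomposition. -/
def gam (ν β i n : ℤ) : ℤ := if i ≤ β then max (n - ν + 1) 0 else max (n - ν) 0

/-- The rank-one piece h^i = min(gamma^i, (h - sum_{k<i} gamma^k)_+). -/
noncomputable def rkOnePiece (h : ℤ → ℤ) (ν β i n : ℤ) : ℤ :=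
  min (gam ν β i n) (max (h n - ∑ k ∈ Finset.Icc 1 (i - 1), gam ν β k n) 0)

/-- t takes exactly two distinct values. -/
def TwoValues (t : ℤ → WithTop ℤ) : Prop :=
  ∃ v w : WithTop ℤ, v ≠ w ∧ (∃ n : ℤ, t n = v) ∧ (∃ n : ℤ, t n = w) ∧
    ∀ n : ℤ, t n = v ∨ t n = w

lemma mono_of_dr (h : ℤ → ℤ) (hdr : ∀ n, 0 ≤ dr h n) :
    ∀ a b : ℤ, a ≤ b → h a ≤ h b := by
  have key : ∀ k : ℕ, ∀ a : ℤ, h a ≤ h (a + k) := by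
    intro k
    induction k with
    | zero => intro a; simp
    | succ n ih =>
      intro a
      have h1 := ih a
      have h2 := hdr (a + (n + 1 : ℕ))
      unfold dr at h2
      have : (a + (n+1:ℕ)) - 1 = a + (n:ℕ) := by push_cast; ring
      rw [this] at h2
      omega
  intro a b hab
  have := key (b - a).toNat a
  have h2 : a + ((b-a).toNat : ℤ) = b := by omega
  rwa [h2] at this

lemma const_of_dr_zero (h : ℤ → ℤ) (c : ℤ) (hz : ∀ m ≤ c, dr h m = 0) :
    ∀ m ≤ c, h m = h c := by
  have key : ∀ k : ℕ, h (c - k) = h c := by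
    intro k
    induction k with
    | zero => simp
    | succ n ih =>
      have h2 := hz (c - n) (by omega)
      unfold dr at h2
      have : (c - (n:ℤ)) - 1 = c - ((n+1:ℕ):ℤ) := by push_cast; ring
      rw [this] at h2
      omega
  intro m hm
  have := key (c - m).toNat
  have h2 : c - ((c-m).toNat : ℤ) = m := by omega
  rwa [h2] at this

lemma h_nu_zero (h ht : ℤ → ℤ) (t : ℤ → WithTop ℤ)
    (hF : IsFDH h) (hTF : TorsionFree h) (hT : TildeSpec h ht) (ht' : TSpec h ht t)
    (htwo : TwoValues t)
    (ρ ν β : ℤ) (hβ0 : 0 ≤ β) (hβρ : β < ρ)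
    (hlin : ∃ N : ℤ, ∀ n ≥ N, h n = ρ * (n - ν) + β) : h ν = 0 := by
  obtain ⟨hpos, hdr, ⟨N₀, hN₀⟩, -⟩ := hF
  obtain ⟨L, hL⟩ := hlin
  have hρ1 : 1 ≤ ρ := by omega
  have hmono := mono_of_dr h hdr
  -- eventual slope
  have hdrL : ∀ n : ℤ, L + 1 ≤ n → dr h n = ρ := by
    intro n hn
    unfold dr
    rw [hL n (by omega), hL (n-1) (by omega)]
    ring
  -- h n ≤ ht n
  have hle : ∀ n : ℤ, h n ≤ ht n := by
    intro n
    exact (hT n).2 ⟨n, le_refl n, by ring⟩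
  -- t (L+1) = ⊤
  have htval : ∀ m : ℤ, L + 1 ≤ m → h m + (L + 1 - m) * dr h m = ρ * (L + 1 - ν) + β := by
    intro m hm
    rw [hL m (by omega), hdrL m hm]
    ring
  have htL : ht (L+1) = ρ * (L + 1 - ν) + β := by
    obtain ⟨m, hm, hv⟩ := (hT (L+1)).1
    rw [hv, htval m hm]
  have htop : t (L+1) = ⊤ := by
    by_contra hne
    obtain ⟨τ, hτ⟩ := WithTop.ne_top_iff_exists.mp hne
    have hm1 : L + 1 ≤ max (L+1) (τ+1) := le_max_left _ _
    have := (ht' (L+1)).1 (max (L+1) (τ+1)) hm1 (by rw [htL, htval _ hm1])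
    rw [← hτ] at this
    have : max (L+1) (τ+1) ≤ τ := WithTop.coe_le_coe.mp this
    omega
  -- t n is finite for n ≤ ν - 1
  have hfin : ∀ n : ℤ, n ≤ ν - 1 → t n ≠ ⊤ := by
    intro n hn htopn
    obtain ⟨m, hm1, hm2, hv⟩ := (ht' n).2.2 htopn (L+1)
    have hval : ht n = ρ * (n - ν) + β := by
      rw [hv, hL m (by omega), hdrL m hm1]; ring
    have h0 : 0 ≤ ht n := le_trans (hpos n) (hle n)
    nlinarith [mul_le_mul_of_nonneg_left (show n - ν ≤ -1 by omega) (show (0:ℤ) ≤ ρ by omega)]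
  -- extract the single finite value τ₀
  obtain ⟨v, w, hvw, -, -, hall⟩ := htwo
  have key : ∃ τ₀ : ℤ, ∀ n : ℤ, n ≤ ν - 1 → t n = (τ₀ : WithTop ℤ) := by
    rcases hall (L+1) with hv' | hw'
    · -- v = ⊤
      have hv' : v = ⊤ := by rw [← hv', htop]
      have hwne : w ≠ ⊤ := by rw [hv'] at hvw; exact fun hh => hvw (by rw [hh])
      obtain ⟨τ₀, hτ₀⟩ := WithTop.ne_top_iff_exists.mp hwne
      refine ⟨τ₀, fun n hn => ?_⟩
      rcases hall n with h1 | h2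
      · exact absurd (h1.trans hv') (hfin n hn)
      · rw [h2, hτ₀]
    · have hw' : w = ⊤ := by rw [← hw', htop]
      have hvne : v ≠ ⊤ := by rw [hw'] at hvw; exact fun hh => hvw (by rw [hh])
      obtain ⟨τ₀, hτ₀⟩ := WithTop.ne_top_iff_exists.mp hvne
      refine ⟨τ₀, fun n hn => ?_⟩
      rcases hall n with h1 | h2
      · rw [h1, hτ₀]
      · exact absurd (h2.trans hw') (hfin n hn)
  obtain ⟨τ₀, hτ₀⟩ := key
  -- dr h τ₀ = 0
  have hdrτ : dr h τ₀ = 0 := by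
    set n₁ := min (ν - 1) (τ₀ - h τ₀ - 1) with hn₁
    have hn₁le : n₁ ≤ ν - 1 := min_le_left _ _
    obtain ⟨hle₁, hv₁⟩ := (ht' n₁).2.1 τ₀ (hτ₀ n₁ hn₁le)
    have h0 : 0 ≤ ht n₁ := le_trans (hpos n₁) (hle n₁)
    have hd := hdr τ₀
    by_contra hne
    have hd1 : 1 ≤ dr h τ₀ := by omega
    have hb : n₁ ≤ τ₀ - h τ₀ - 1 := min_le_right _ _
    nlinarith [mul_le_mul_of_nonneg_right (show n₁ - τ₀ ≤ -h τ₀ - 1 by omega) (show (0:ℤ) ≤ dr h τ₀ - 1 by omega)]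
  -- h τ₀ = 0
  have hzero : ∀ m ≤ τ₀, dr h m = 0 := by
    intro m hm
    have := hdr m
    by_contra hne
    have := hTF m τ₀ hm (by omega)
    omega
  have hτ₀0 : h τ₀ = 0 := by
    have := const_of_dr_zero h τ₀ hzero (min N₀ τ₀) (min_le_right _ _)
    rw [hN₀ (min N₀ τ₀) (min_le_left _ _)] at this
    omega
  -- ht (ν-1) = 0
  obtain ⟨hleτ, hvτ⟩ := (ht' (ν-1)).2.1 τ₀ (hτ₀ (ν-1) (le_refl _))
  have hht0 : ht (ν-1) = 0 := by rw [hvτ, hτ₀0, hdrτ]; ring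
  -- h (ν-1) = 0
  have hν1 : h (ν-1) = 0 := by
    have := hle (ν-1)
    have := hpos (ν-1)
    omega
  -- ν is a maximizer at ν-1, so ν ≤ τ₀
  have hmax : ht (ν-1) = h ν + (ν - 1 - ν) * dr h ν := by
    unfold dr
    rw [hht0]
    have : (ν : ℤ) - 1 = ν - 1 := rfl
    omega
  have := (ht' (ν-1)).1 ν (by omega) hmax
  rw [hτ₀ (ν-1) (le_refl _)] at this
  have hντ : ν ≤ τ₀ := WithTop.coe_le_coe.mp this
  have := hmono ν τ₀ hντ
  have := hpos ν
  omega

/-- for 1 <= i <= beta the deficiency of h^i, the sum over all of ZZ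
of ((n - nu + 1)_+ - h^i(n)) (all of whose terms outside [nu, N] vanish), is
strictly positive. -/
theorem pieces_deficiency_pos (h ht : ℤ → ℤ) (t : ℤ → WithTop ℤ)
    (hF : IsFDH h) (hTF : TorsionFree h) (hT : TildeSpec h ht) (ht' : TSpec h ht t)
    (htwo : TwoValues t)
    (ρ ν β : ℤ) (hβ0 : 0 ≤ β) (hβρ : β < ρ)
    (hlin : ∃ N : ℤ, ∀ n ≥ N, h n = ρ * (n - ν) + β) :
    ∀ i : ℤ, 1 ≤ i → i ≤ β →
      ∀ N : ℤ, ν ≤ N → (∀ n ≥ N, rkOnePiece h ν β i n = n - ν + 1) →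
        0 < ∑ n ∈ Finset.Icc ν N, (max (n - ν + 1) 0 - rkOnePiece h ν β i n) := by
  have hν0 : h ν = 0 := h_nu_zero h ht t hF hTF hT ht' htwo ρ ν β hβ0 hβρ hlin
  intro i hi1 hiβ N hN _
  apply Finset.sum_pos'
  · intro n _
    have : rkOnePiece h ν β i n ≤ max (n - ν + 1) 0 := by
      unfold rkOnePiece gam
      rw [if_pos hiβ]
      exact min_le_left _ _
    omega
  · refine ⟨ν, Finset.mem_Icc.mpr ⟨le_refl _, hN⟩, ?_⟩
    have hsum : 0 ≤ ∑ k ∈ Finset.Icc 1 (i - 1), gam ν β k ν := by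
      apply Finset.sum_nonneg
      intro k _
      unfold gam
      split <;> exact le_max_right _ _
    have hp : rkOnePiece h ν β i ν = 0 := by
      unfold rkOnePiece
      rw [hν0]
      have h1 : max (0 - ∑ k ∈ Finset.Icc 1 (i - 1), gam ν β k ν) 0 = 0 := by omega
      rw [h1]
      have : 0 ≤ gam ν β i ν := by unfold gam; split <;> exact le_max_right _ _
      omega
    rw [hp]
    omega
end

section
/- Define a preorder on torsion-free FDH functions: for h, h′ of ranks ρ, ρ′, degrees d, d′, deficiencies δ, δ′, set h ≽ h′ iff d/ρ > d′/ρ′, or (d/ρ = d′/ρ′ and δ/ρ ≤ δ′/ρ′); and h ≻ h′ iff d/ρ > d′/ρ′, or (d/ρ = d′/ρ′ and δ/ρ < δ′/ρ′). Let h be an FDH function with WHN graded pieces h₁, …, h_{s+1} (the nontrivial torsion-free pieces), each decomposed into rank-one pieces h_i = Σ_{j=1}^{ρ_i} h_i^j as in the canonical decomposition. Then h_i^1 ≽ h_i^2 ≽ ⋯ ≽ h_i^{ρ_i} for each i = 1, …, s+1. -/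
open Finset

/-- g is a rank-one torsion-free FDH-type function of degree d with deficiency
delta = sum over all of ZZ of ((n + d + 1)_+ - g n), the sum being computed over any
finite interval [M, N] outside of which all terms vanish. -/
def HasDegDef (g : ℤ → ℤ) (d δ : ℤ) : Prop :=
  ∃ M N : ℤ, M ≤ N ∧ (∀ n : ℤ, n < M → g n = 0 ∧ n + d + 1 ≤ 0) ∧
    (∀ n : ℤ, n > N → g n = n + d + 1) ∧
    δ = ∑ n ∈ Finset.Icc M N, (max (n + d + 1) 0 - g n)


lemma gam_nonneg (ν β i n : ℤ) : 0 ≤ gam ν β i n := by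
  unfold gam; split <;> exact le_max_right _ _

lemma rkOnePiece_nonneg (h : ℤ → ℤ) (ν β i n : ℤ) : 0 ≤ rkOnePiece h ν β i n :=
  le_min (gam_nonneg ν β i n) (le_max_right _ _)

lemma gam_succ_le (ν β j n : ℤ) : gam ν β (j + 1) n ≤ gam ν β j n := by
  unfold gam
  split_ifs with h1 h2 h2
  · exact le_rfl
  · omega
  · exact max_le_max (by omega) le_rfl
  · exact le_rfl

lemma piece_succ_le (h : ℤ → ℤ) (ν β j n : ℤ) :
    rkOnePiece h ν β (j + 1) n ≤ rkOnePiece h ν β j n := by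
  unfold rkOnePiece
  have e : j + 1 - 1 = j := by ring
  rw [e]
  refine min_le_min (gam_succ_le ν β j n) (max_le_max ?_ le_rfl)
  have : ∑ k ∈ Finset.Icc 1 (j - 1), gam ν β k n ≤ ∑ k ∈ Finset.Icc 1 j, gam ν β k n :=
    Finset.sum_le_sum_of_subset_of_nonneg
      (Finset.Icc_subset_Icc le_rfl (by omega)) (fun k _ _ => gam_nonneg ν β k n)
  omega

lemma sum_gam_eq (ν β : ℤ) (hβ : 0 ≤ β) (n : ℤ) (hn : ν ≤ n) :
    ∀ m : ℤ, 0 ≤ m → ∑ k ∈ Finset.Icc 1 m, gam ν β k n = m * (n - ν) + min m β := by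
  refine fun m hm => Int.le_induction (motive := fun m _ =>
      ∑ k ∈ Finset.Icc 1 m, gam ν β k n = m * (n - ν) + min m β) ?_ ?_ m hm
  · show ∑ k ∈ Finset.Icc (1:ℤ) 0, gam ν β k n = 0 * (n - ν) + min 0 β
    have he : Finset.Icc (1:ℤ) 0 = ∅ := by
      ext k; simp only [Finset.mem_Icc, Finset.notMem_empty, iff_false]; omega
    rw [he]
    simp only [Finset.sum_empty]
    omega
  · intro m hm ih
    show ∑ k ∈ Finset.Icc (1:ℤ) (m + 1), gam ν β k n = (m + 1) * (n - ν) + min (m + 1) β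
    change ∑ k ∈ Finset.Icc 1 m, gam ν β k n = m * (n - ν) + min m β at ih
    have he : Finset.Icc (1:ℤ) (m + 1) = insert (m + 1) (Finset.Icc 1 m) := by
      ext k; simp only [Finset.mem_Icc, Finset.mem_insert]; omega
    have hnm : (m + 1) ∉ Finset.Icc (1:ℤ) m := by
      simp only [Finset.mem_Icc]; omega
    rw [he, Finset.sum_insert hnm, ih]
    have hg : gam ν β (m + 1) n = if m + 1 ≤ β then n - ν + 1 else n - ν := by
      unfold gam; split_ifs <;> omega
    rw [hg]
    split_ifs with hb
    · have h1 : min m β = m := by omega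
      have h2 : min (m + 1) β = m + 1 := by omega
      rw [h1, h2]; ring
    · have h1 : min m β = β := by omega
      have h2 : min (m + 1) β = β := by omega
      rw [h1, h2]; ring

lemma piece_eventually (h : ℤ → ℤ) (ρ ν β Nl : ℤ) (hβ0 : 0 ≤ β) (hβρ : β < ρ)
    (hlin : ∀ n ≥ Nl, h n = ρ * (n - ν) + β)
    (j : ℤ) (hj1 : 1 ≤ j) (hjρ : j ≤ ρ) :
    ∀ n : ℤ, Nl ≤ n → ν + ρ ≤ n → rkOnePiece h ν β j n = gam ν β j n := by
  intro n hn1 hn2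
  have hρ1 : 1 ≤ ρ := by omega
  have hνn : ν ≤ n := by omega
  unfold rkOnePiece
  rw [sum_gam_eq ν β hβ0 n hνn (j - 1) (by omega), hlin n hn1]
  apply min_eq_left
  unfold gam
  split_ifs with hjβ
  · have hmin : min (j - 1) β = j - 1 := by omega
    rw [hmin, max_eq_left (by omega : (0:ℤ) ≤ n - ν + 1)]
    refine le_max_of_le_left ?_
    nlinarith [hβρ, hn2, hβ0, hj1]
  · have hmin : min (j - 1) β = β := by omega
    rw [hmin, max_eq_left (by omega : (0:ℤ) ≤ n - ν)]
    refine le_max_of_le_left ?_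
    nlinarith [hjρ, hn2]

lemma deg_eq (h : ℤ → ℤ) (ρ ν β Nl : ℤ) (hβ0 : 0 ≤ β) (hβρ : β < ρ)
    (hlin : ∀ n ≥ Nl, h n = ρ * (n - ν) + β)
    (j : ℤ) (hj1 : 1 ≤ j) (hjρ : j ≤ ρ) (d δ : ℤ)
    (hD : HasDegDef (rkOnePiece h ν β j) d δ) :
    d = if j ≤ β then -ν else -ν - 1 := by
  obtain ⟨M, N, _, _, hN, _⟩ := hD
  set n : ℤ := max (N + 1) (max Nl (ν + ρ)) with hn
  have hx1 : N + 1 ≤ n := le_max_left _ _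
  have hx2 : Nl ≤ n := le_trans (le_max_left Nl (ν + ρ)) (le_max_right _ _)
  have hx3 : ν + ρ ≤ n := le_trans (le_max_right Nl (ν + ρ)) (le_max_right _ _)
  have h1 : rkOnePiece h ν β j n = n + d + 1 := hN n (by omega)
  have h2 : rkOnePiece h ν β j n = gam ν β j n :=
    piece_eventually h ρ ν β Nl hβ0 hβρ hlin j hj1 hjρ n hx2 hx3
  have hρ1 : 1 ≤ ρ := by omega
  have hνn : ν ≤ n := by omega
  have h3 : gam ν β j n = if j ≤ β then n - ν + 1 else n - ν := by
    unfold gam; split_ifs <;> omega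
  rw [h2, h3] at h1
  split_ifs at h1 ⊢ <;> omega

lemma def_le (g g' : ℤ → ℤ) (d δ δ' : ℤ)
    (hA : HasDegDef g d δ) (hB : HasDegDef g' d δ')
    (hg0 : ∀ n, 0 ≤ g n) (hg'0 : ∀ n, 0 ≤ g' n)
    (hle : ∀ n, g' n ≤ g n) : δ ≤ δ' := by
  obtain ⟨M, N, hMN, h0, hN, hδ⟩ := hA
  obtain ⟨M', N', hMN', h0', hN', hδ'⟩ := hB
  set L : ℤ := min M M'
  set R : ℤ := max N N'
  have e1 : δ = ∑ n ∈ Finset.Icc L R, (max (n + d + 1) 0 - g n) := by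
    rw [hδ]
    apply Finset.sum_subset (Finset.Icc_subset_Icc (min_le_left _ _) (le_max_left _ _))
    intro x hx hnx
    simp only [Finset.mem_Icc] at hx hnx
    rcases (by omega : x < M ∨ N < x) with hc | hc
    · have := h0 x hc
      rw [this.1, max_eq_right (by omega)]; ring
    · have h1 := hN x hc
      have h2 := hg0 x
      rw [h1] at h2 ⊢
      rw [max_eq_left h2]; ring
  have e2 : δ' = ∑ n ∈ Finset.Icc L R, (max (n + d + 1) 0 - g' n) := by
    rw [hδ']
    apply Finset.sum_subset (Finset.Icc_subset_Icc (min_le_right _ _) (le_max_right _ _))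
    intro x hx hnx
    simp only [Finset.mem_Icc] at hx hnx
    rcases (by omega : x < M' ∨ N' < x) with hc | hc
    · have := h0' x hc
      rw [this.1, max_eq_right (by omega)]; ring
    · have h1 := hN' x hc
      have h2 := hg'0 x
      rw [h1] at h2 ⊢
      rw [max_eq_left h2]; ring
  rw [e1, e2]
  exact Finset.sum_le_sum fun n _ => by have := hle n; omega


/-- within a WHN graded piece (a torsion-free FDH function with
trivial WHN filtration), the rank-one pieces are nonincreasing for the order
comparing degree and then (inversely) deficiency:
h^1 >= h^2 >= ... >= h^rho. -/
theorem pieces_ordered (h ht : ℤ → ℤ) (t : ℤ → WithTop ℤ)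
    (hF : IsFDH h) (hTF : TorsionFree h) (hT : TildeSpec h ht) (ht' : TSpec h ht t)
    (htwo : TwoValues t)
    (ρ ν β : ℤ) (hβ0 : 0 ≤ β) (hβρ : β < ρ)
    (hlin : ∃ N : ℤ, ∀ n ≥ N, h n = ρ * (n - ν) + β) :
    ∀ j : ℤ, 1 ≤ j → j < ρ →
      ∀ d δ d' δ' : ℤ,
        HasDegDef (rkOnePiece h ν β j) d δ →
        HasDegDef (rkOnePiece h ν β (j + 1)) d' δ' →
        (d' < d ∨ (d = d' ∧ δ ≤ δ')) := by
  obtain ⟨Nl, hlin⟩ := hlin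
  intro j hj1 hjρ d δ d' δ' hD hD'
  have hd : d = if j ≤ β then -ν else -ν - 1 :=
    deg_eq h ρ ν β Nl hβ0 hβρ hlin j hj1 (by omega) d δ hD
  have hd' : d' = if j + 1 ≤ β then -ν else -ν - 1 :=
    deg_eq h ρ ν β Nl hβ0 hβρ hlin (j + 1) (by omega) (by omega) d' δ' hD'
  by_cases hb : j + 1 ≤ β
  · right
    have hdd : d = d' := by rw [hd, hd']; split_ifs <;> omega
    refine ⟨hdd, ?_⟩
    rw [hdd] at hD
    exact def_le _ _ d' δ δ' hD hD' (fun n => rkOnePiece_nonneg h ν β j n)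
      (fun n => rkOnePiece_nonneg h ν β (j + 1) n) (fun n => piece_succ_le h ν β j n)
  · by_cases hb2 : j ≤ β
    · left; rw [hd, hd']; split_ifs <;> omega
    · right
      have hdd : d = d' := by rw [hd, hd']; split_ifs <;> omega
      refine ⟨hdd, ?_⟩
      rw [hdd] at hD
      exact def_le _ _ d' δ δ' hD hD' (fun n => rkOnePiece_nonneg h ν β j n)
        (fun n => rkOnePiece_nonneg h ν β (j + 1) n) (fun n => piece_succ_le h ν β j n)
end
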